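/- Let F be holomorphic on Δ⁺ with a continuous extension to Δ⁺ ∪ γ, suppose there exists C > 0 such that |Im F(t)| ≤ C·|Re F(t)| for every t ∈ γ, and suppose F is not identically zero on Δ⁺. Then the set {t ∈ γ : Re F(t) ≠ 0} is a relatively open, dense subset of the interval γ. -/

import Mathlib

set_option maxHeartbeats 1000000

open Complex Set

/-- The open upper half disc `Δ⁺ = {ζ ∈ ℂ : |ζ| < 1, Im ζ > 0}`. -/
def upperHalfDisc : Set ℂ := {z : ℂ | ‖z‖ < 1 ∧ 0 < z.im}

/-- The interval `γ = (-1,1)` viewed as a subset of the real axis in `ℂ`. -/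
def realSegment : Set ℂ := {z : ℂ | z.im = 0 ∧ -1 < z.re ∧ z.re < 1}

lemma diffAt_conj_comp {F : ℂ → ℂ} {w : ℂ} (c : ℂ)
    (h : DifferentiableAt ℂ F ((starRingEnd ℂ) w + c)) :
    DifferentiableAt ℂ (fun z => (starRingEnd ℂ) (F ((starRingEnd ℂ) z + c))) w := by
  set u := (starRingEnd ℂ) w + c with hu
  obtain ⟨f', hf'⟩ := h
  have hf'' : HasDerivAt F (f' 1) u := hf'.hasDerivAt
  rw [hasDerivAt_iff_isLittleO] at hf''
  have htend : Filter.Tendsto (fun z : ℂ => (starRingEnd ℂ) z + c) (nhds w) (nhds u) :=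
    (Complex.continuous_conj.tendsto w).add tendsto_const_nhds
  have hcomp := hf''.comp_tendsto htend
  have goal : HasDerivAt (fun z => (starRingEnd ℂ) (F ((starRingEnd ℂ) z + c)))
      ((starRingEnd ℂ) (f' 1)) w := by
    rw [hasDerivAt_iff_isLittleO]
    rw [Asymptotics.isLittleO_iff] at hcomp ⊢
    intro ε hε
    filter_upwards [hcomp hε] with x hx
    have h1 : (starRingEnd ℂ) ((starRingEnd ℂ) x + c - u) = x - w := by
      simp only [hu, map_sub, map_add, Complex.conj_conj]
      ring
    have key : (starRingEnd ℂ) (F ((starRingEnd ℂ) x + c)) -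
        (starRingEnd ℂ) (F u) - (x - w) • (starRingEnd ℂ) (f' 1)
        = (starRingEnd ℂ) (F ((starRingEnd ℂ) x + c) - F u -
            (((starRingEnd ℂ) x + c) - u) • f' 1) := by
      rw [map_sub, map_sub, smul_eq_mul, smul_eq_mul, map_mul, h1]
    simp only [Function.comp] at hx
    calc ‖(starRingEnd ℂ) (F ((starRingEnd ℂ) x + c)) -
          (starRingEnd ℂ) (F u) - (x - w) • (starRingEnd ℂ) (f' 1)‖
        = ‖F ((starRingEnd ℂ) x + c) - F u - (((starRingEnd ℂ) x + c) - u) • f' 1‖ := by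
          rw [key]; exact Complex.norm_conj _
      _ ≤ ε * ‖(starRingEnd ℂ) x + c - u‖ := hx
      _ = ε * ‖x - w‖ := by
          rw [← h1, Complex.norm_conj]
  exact goal.differentiableAt

lemma isOpen_upperHalfDisc : IsOpen upperHalfDisc :=
  (isOpen_lt continuous_norm continuous_const).inter
    (isOpen_lt continuous_const Complex.continuous_im)

lemma convex_upperHalfDisc : Convex ℝ upperHalfDisc := by
  have : upperHalfDisc = Metric.ball (0:ℂ) 1 ∩ {z : ℂ | 0 < z.im} := by
    ext z
    simp [upperHalfDisc, Metric.mem_ball, Complex.dist_eq]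
  rw [this]
  exact (convex_ball 0 1).inter (convex_halfSpace_im_gt 0)

lemma vanish_on_upperHalfDisc {F : ℂ → ℂ}
    (hF_hol : DifferentiableOn ℂ F upperHalfDisc)
    (hF_cont : ContinuousOn F (upperHalfDisc ∪ realSegment))
    {a d : ℝ} (hd : 0 < d) (hband : |a| + 2 * d < 1)
    (hzero : ∀ t : ℝ, |t - a| ≤ d → F (t : ℂ) = 0) :
    ∀ z ∈ upperHalfDisc, F z = 0 := by
  have hopen := isOpen_upperHalfDisc
  have hreim : ∀ x y : ℝ, ((x : ℂ) + (y : ℂ) * Complex.I).re = x ∧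
      ((x : ℂ) + (y : ℂ) * Complex.I).im = y := by
    intro x y; constructor <;> simp
  set Q : Set ℂ := Set.Ioo (a - d) (a + d) ×ℂ Set.Ioo 0 d with hQ
  set Qc : Set ℂ := Set.Icc (a - d) (a + d) ×ℂ Set.Icc 0 d with hQc
  have hQopen : IsOpen Q := IsOpen.reProdIm isOpen_Ioo isOpen_Ioo
  have hQsub : Q ⊆ Qc := fun z hz =>
    Complex.mem_reProdIm.2 ⟨Set.Ioo_subset_Icc_self (Complex.mem_reProdIm.1 hz).1,
      Set.Ioo_subset_Icc_self (Complex.mem_reProdIm.1 hz).2⟩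
  have habs : ∀ z : ℂ, z ∈ Qc → |z.re| ≤ |a| + d := by
    intro z hz
    obtain ⟨h1, h2⟩ := (Complex.mem_reProdIm.1 hz).1
    rw [abs_le]
    constructor
    · linarith [neg_abs_le a]
    · linarith [le_abs_self a]
  have hQcsub : Qc ⊆ upperHalfDisc ∪ realSegment := by
    intro z hz
    have hre := habs z hz
    have him : z.im ∈ Set.Icc 0 d := (Complex.mem_reProdIm.1 hz).2
    have hre' := abs_le.1 hre
    rcases eq_or_lt_of_le him.1 with h0 | h0
    · right
      exact ⟨h0.symm, by linarith, by linarith⟩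
    · left
      refine ⟨?_, h0⟩
      calc ‖z‖ ≤ |z.re| + |z.im| := Complex.norm_le_abs_re_add_abs_im z
        _ ≤ (|a| + d) + d := by
            have : |z.im| ≤ d := by rw [_root_.abs_of_nonneg him.1]; exact him.2
            linarith
        _ < 1 := by linarith
  have hQsubU : Q ⊆ upperHalfDisc := by
    intro z hz
    rcases hQcsub (hQsub hz) with h | h
    · exact h
    · exact absurd h.1 (ne_of_gt (Complex.mem_reProdIm.1 hz).2.1)
  set σ : ℂ → ℂ := fun z => (starRingEnd ℂ) z + (d : ℂ) * Complex.I with hσ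
  have hσre : ∀ z, (σ z).re = z.re := by intro z; simp [hσ]
  have hσim : ∀ z, (σ z).im = d - z.im := by
    intro z; simp [hσ]; ring
  have hσσ : ∀ z, σ (σ z) = z := by
    intro z
    simp only [hσ, map_add, map_mul, Complex.conj_conj, Complex.conj_I, Complex.conj_ofReal]
    ring
  have hσQ : ∀ z ∈ Q, σ z ∈ Q := by
    intro z hz
    obtain ⟨h1, h2⟩ := Complex.mem_reProdIm.1 hz
    refine Complex.mem_reProdIm.2 ⟨?_, ?_⟩
    · rw [hσre]; exact h1
    · rw [hσim]; exact ⟨by simp at h2 ⊢; linarith [h2.2], by simp at h2 ⊢; linarith [h2.1]⟩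
  have hσQc : Set.MapsTo σ Qc Qc := by
    intro z hz
    obtain ⟨h1, h2⟩ := Complex.mem_reProdIm.1 hz
    refine Complex.mem_reProdIm.2 ⟨?_, ?_⟩
    · rw [hσre]; exact h1
    · rw [hσim]; exact ⟨by simp at h2 ⊢; linarith [h2.2], by simp at h2 ⊢; linarith [h2.1]⟩
  have hFcontQc : ContinuousOn F Qc := hF_cont.mono hQcsub
  have hσcont : Continuous σ := Complex.continuous_conj.add continuous_const
  have hKc : IsCompact Qc := Metric.isCompact_of_isClosed_isBounded
    (IsClosed.reProdIm isClosed_Icc isClosed_Icc)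
    (Bornology.IsBounded.reProdIm (Metric.isBounded_Icc (a-d) (a+d)) (Metric.isBounded_Icc 0 d))
  obtain ⟨M, hM⟩ := hKc.exists_bound_of_continuousOn hFcontQc
  have haQc : (a : ℂ) ∈ Qc := by
    refine Complex.mem_reProdIm.2 ⟨?_, ?_⟩
    · simp only [Complex.ofReal_re]
      exact ⟨by linarith, by linarith⟩
    · simp only [Complex.ofReal_im]
      exact ⟨le_refl 0, hd.le⟩
  have hM0 : 0 ≤ M := le_trans (norm_nonneg _) (hM _ haQc)
  set G : ℂ → ℂ := fun z => F z * (starRingEnd ℂ) (F (σ z)) with hG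
  have hGcont : ContinuousOn G Qc := by
    apply ContinuousOn.mul hFcontQc
    exact Complex.continuous_conj.comp_continuousOn
      (hFcontQc.comp hσcont.continuousOn hσQc)
  have hGdiff : DifferentiableOn ℂ G Q := by
    intro z hz
    apply DifferentiableAt.differentiableWithinAt
    apply DifferentiableAt.mul
    · exact hF_hol.differentiableAt (hopen.mem_nhds (hQsubU hz))
    · exact diffAt_conj_comp ((d : ℂ) * Complex.I)
        (hF_hol.differentiableAt (hopen.mem_nhds (hQsubU (hσQ z hz))))
  have hclQQc : closure Q = Qc := by
    rw [hQ, hQc, Complex.closure_reProdIm, closure_Ioo (by linarith : a - d ≠ a + d),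
      closure_Ioo hd.ne]
  have hfrQc : frontier Q ⊆ Qc := by
    rw [← hclQQc]; exact frontier_subset_closure
  -- main quantitative bound
  have hmain : ∀ lam : ℝ, 0 ≤ lam → ∀ y : ℝ, y ∈ Set.Ioo 0 d →
      ‖G ((a : ℂ) + (y : ℂ) * Complex.I)‖ ≤ M ^ 2 * Real.exp (-(lam * y ^ 2)) := by
    intro lam hlam y hy
    set ψ : ℂ → ℂ := fun z => Complex.exp (-(lam : ℂ) * (z - (a : ℂ)) ^ 2) with hψ
    set Φ : ℂ → ℂ := fun z => G z * ψ z with hΦ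
    have hψabs : ∀ z : ℂ, ‖ψ z‖ = Real.exp (-(lam * ((z.re - a) ^ 2 - z.im ^ 2))) := by
      intro z
      rw [hψ, Complex.norm_exp]
      congr 1
      simp [pow_two, Complex.mul_re, Complex.mul_im, Complex.sub_re, Complex.sub_im]
    have hψdiff : Differentiable ℂ ψ :=
      (((differentiable_id.sub (differentiable_const _)).pow 2).const_mul (-(lam:ℂ))).cexp
    have hfrontier : ∀ z ∈ frontier Q, ‖Φ z‖ ≤ M ^ 2 := by
      intro z hz
      have hzQc : z ∈ Qc := hfrQc hz
      rw [hQ, Complex.frontier_reProdIm] at hz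
      rcases hz with hz | hz
      · -- horizontal edges: im ∈ frontier (Ioo 0 d) = {0, d}
        have him : z.im ∈ ({0, d} : Set ℝ) := by
          have := (Complex.mem_reProdIm.1 hz).2
          rwa [frontier_Ioo hd] at this
        have hrez : |z.re - a| ≤ d := by
          obtain ⟨h1, h2⟩ := (Complex.mem_reProdIm.1 hzQc).1
          rw [abs_le]; constructor <;> linarith
        rcases him with h0 | h0
        · have hzeq : z = ((z.re : ℝ) : ℂ) := Complex.ext (by simp) (by simp [h0])
          have hz0 : F z = 0 := by rw [hzeq]; exact hzero z.re hrez
          have : Φ z = 0 := by simp [hΦ, hG, hz0]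
          rw [this]; simp; positivity
        · have hzeq : σ z = ((z.re : ℝ) : ℂ) := by
            apply Complex.ext
            · simp [hσre]
            · simp only [Set.mem_singleton_iff] at h0
              simp [hσim, h0]
          have hz0 : F (σ z) = 0 := by rw [hzeq]; exact hzero z.re hrez
          have : Φ z = 0 := by simp [hΦ, hG, hz0]
          rw [this, norm_zero]; positivity
      · -- vertical edges
        have hre : z.re ∈ ({a - d, a + d} : Set ℝ) := by
          have := (Complex.mem_reProdIm.1 hz).1
          rwa [frontier_Ioo (by linarith : a - d < a + d)] at this
        have hre2 : (z.re - a) ^ 2 = d ^ 2 := by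
          rcases hre with h | h
          · rw [h]; ring
          · simp only [Set.mem_singleton_iff] at h
            rw [h]; ring
        have him : z.im ∈ Set.Icc 0 d := (Complex.mem_reProdIm.1 hzQc).2
        have hGz : ‖G z‖ ≤ M ^ 2 := by
          have h1 : ‖F z‖ ≤ M := hM z hzQc
          have h2 : ‖F (σ z)‖ ≤ M := hM (σ z) (hσQc hzQc)
          calc ‖G z‖ = ‖F z‖ * ‖F (σ z)‖ := by
                rw [hG, norm_mul]
                norm_num [Complex.norm_conj]
            _ ≤ M * M := mul_le_mul h1 h2 (norm_nonneg _) hM0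
            _ = M ^ 2 := (sq M).symm
        have hψz : ‖ψ z‖ ≤ 1 := by
          rw [hψabs z, hre2]
          calc Real.exp (-(lam * (d ^ 2 - z.im ^ 2))) ≤ Real.exp 0 := by
                apply Real.exp_le_exp.2
                have : z.im ^ 2 ≤ d ^ 2 := by nlinarith [him.1, him.2]
                nlinarith
            _ = 1 := Real.exp_zero
        calc ‖Φ z‖ = ‖G z‖ * ‖ψ z‖ := norm_mul _ _
          _ ≤ M ^ 2 * 1 := mul_le_mul hGz hψz (norm_nonneg _) (by positivity)
          _ = M ^ 2 := mul_one _
    have hbd : Bornology.IsBounded Q :=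
      Bornology.IsBounded.reProdIm (Metric.isBounded_Ioo (a-d) (a+d)) (Metric.isBounded_Ioo 0 d)
    have hdc : DiffContOnCl ℂ Φ Q := by
      constructor
      · exact hGdiff.mul hψdiff.differentiableOn
      · rw [hclQQc]; exact hGcont.mul hψdiff.continuous.continuousOn
    have hz0 : (a : ℂ) + (y : ℂ) * Complex.I ∈ Q := by
      refine Complex.mem_reProdIm.2 ⟨?_, ?_⟩
      · rw [(hreim a y).1]
        exact ⟨by linarith, by linarith⟩
      · rw [(hreim a y).2]
        exact hy
    have hle := Complex.norm_le_of_forall_mem_frontier_norm_le hbd hdc hfrontier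
      (subset_closure hz0)
    have hψz0 : ‖ψ ((a : ℂ) + (y : ℂ) * Complex.I)‖ = Real.exp (lam * y ^ 2) := by
      rw [hψabs]
      congr 1
      simp
    rw [hΦ] at hle
    simp only at hle
    rw [norm_mul, hψz0] at hle
    have hE1 := Real.exp_pos (lam * y ^ 2)
    have hE2 := Real.exp_pos (-(lam * y ^ 2))
    have hexp : Real.exp (-(lam * y ^ 2)) * Real.exp (lam * y ^ 2) = 1 := by
      rw [← Real.exp_add]; simp
    nlinarith [norm_nonneg (G ((a : ℂ) + (y : ℂ) * Complex.I))]
  -- G vanishes on the vertical segment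
  have hGzero : ∀ y ∈ Set.Ioo (0 : ℝ) d, G ((a : ℂ) + (y : ℂ) * Complex.I) = 0 := by
    intro y hy
    have hlim : Filter.Tendsto (fun n : ℕ => M ^ 2 * Real.exp (-((n : ℝ) * y ^ 2)))
        Filter.atTop (nhds 0) := by
      have h1 : ∀ n : ℕ, Real.exp (-((n : ℝ) * y ^ 2)) = Real.exp (-(y ^ 2)) ^ n := by
        intro n; rw [← Real.exp_nat_mul]; congr 1; ring
      simp only [h1]
      have h2 : Filter.Tendsto (fun n : ℕ => Real.exp (-(y ^ 2)) ^ n) Filter.atTop (nhds 0) := by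
        apply tendsto_pow_atTop_nhds_zero_of_lt_one (Real.exp_pos _).le
        rw [Real.exp_lt_one_iff]
        nlinarith [hy.1]
      have := h2.const_mul (M ^ 2)
      simpa using this
    have hle : ∀ n : ℕ, ‖G ((a : ℂ) + (y : ℂ) * Complex.I)‖ ≤
        M ^ 2 * Real.exp (-((n : ℝ) * y ^ 2)) :=
      fun n => hmain n (Nat.cast_nonneg n) y hy
    have : ‖G ((a : ℂ) + (y : ℂ) * Complex.I)‖ ≤ 0 :=
      le_of_tendsto_of_tendsto' tendsto_const_nhds hlim hle
    exact norm_le_zero_iff.1 this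
  -- identity theorem on Q
  have hz₀Q : (a : ℂ) + ((d / 2 : ℝ) : ℂ) * Complex.I ∈ Q := by
    refine Complex.mem_reProdIm.2 ⟨?_, ?_⟩
    · rw [(hreim a (d / 2)).1]
      exact ⟨by linarith, by linarith⟩
    · rw [(hreim a (d / 2)).2]
      exact ⟨by linarith, by linarith⟩
  have hGQ : Set.EqOn G 0 Q := by
    have hana : AnalyticOnNhd ℂ G Q := hGdiff.analyticOnNhd hQopen
    have hQconv : Convex ℝ Q := by
      apply Convex.inter
      · exact (convex_Ioo _ _).linear_preimage Complex.reLm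
      · exact (convex_Ioo _ _).linear_preimage Complex.imLm
    set z₀ : ℂ := (a : ℂ) + ((d / 2 : ℝ) : ℂ) * Complex.I with hz₀def
    have hfreq : ∃ᶠ z in nhdsWithin z₀ {z₀}ᶜ, G z = 0 := by
      set u : ℕ → ℂ := fun n => (a : ℂ) + ((d / 2 + d / 4 * (1 / ((n : ℝ) + 1)) : ℝ) : ℂ) * Complex.I with hu
      have hn1 : ∀ n : ℕ, 0 < 1 / ((n : ℝ) + 1) := by intro n; positivity
      have hn2 : ∀ n : ℕ, 1 / ((n : ℝ) + 1) ≤ 1 := by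
        intro n
        rw [div_le_one (by positivity)]
        linarith [Nat.cast_nonneg (α := ℝ) n]
      have hu_mem : ∀ n : ℕ, (d / 2 + d / 4 * (1 / ((n : ℝ) + 1))) ∈ Set.Ioo (0 : ℝ) d := by
        intro n
        constructor
        · nlinarith [hn1 n]
        · nlinarith [hn1 n, hn2 n]
      have huG : ∀ n, G (u n) = 0 := fun n => hGzero _ (hu_mem n)
      have hune : ∀ n, u n ≠ z₀ := by
        intro n h
        have h1 : (u n).im = d / 2 + d / 4 * (1 / ((n : ℝ) + 1)) := (hreim a _).2
        have h2 : z₀.im = d / 2 := (hreim a _).2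
        rw [h, h2] at h1
        nlinarith [hn1 n, hd]
      have hulim : Filter.Tendsto u Filter.atTop (nhds z₀) := by
        have h0 : Filter.Tendsto (fun n : ℕ => 1 / ((n : ℝ) + 1)) Filter.atTop (nhds 0) :=
          tendsto_one_div_add_atTop_nhds_zero_nat
        have h1 : Filter.Tendsto (fun n : ℕ => d / 2 + d / 4 * (1 / ((n : ℝ) + 1)))
            Filter.atTop (nhds (d / 2)) := by
          have := (h0.const_mul (d / 4)).const_add (d / 2)
          simpa using this
        have hcont : Continuous (fun y : ℝ => (a : ℂ) + (y : ℂ) * Complex.I) :=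
          continuous_const.add (Complex.continuous_ofReal.mul continuous_const)
        exact (hcont.tendsto (d / 2)).comp h1
      have hulim' : Filter.Tendsto u Filter.atTop (nhdsWithin z₀ {z₀}ᶜ) :=
        tendsto_nhdsWithin_of_tendsto_nhds_of_eventually_within u hulim
          (Filter.Eventually.of_forall hune)
      exact hulim'.frequently (Filter.Eventually.of_forall huG).frequently
    exact hana.eqOn_zero_of_preconnected_of_frequently_eq_zero hQconv.isPreconnected hz₀Q hfreq
  -- extract an open set where F vanishes
  obtain ⟨W, hWopen, hWne, hWsub, hWzero⟩ : ∃ W : Set ℂ, IsOpen W ∧ W.Nonempty ∧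
      W ⊆ upperHalfDisc ∧ ∀ z ∈ W, F z = 0 := by
    by_cases hcase : ∃ w ∈ Q, F w ≠ 0
    · obtain ⟨w, hwQ, hwF⟩ := hcase
      set V : Set ℂ := Q ∩ F ⁻¹' ({0}ᶜ) with hV
      have hVopen : IsOpen V :=
        (hF_cont.mono fun z hz => Or.inl (hQsubU hz)).isOpen_inter_preimage hQopen
          isOpen_compl_singleton
      refine ⟨σ ⁻¹' V, hVopen.preimage hσcont, ⟨σ w, ?_⟩, ?_, ?_⟩
      · show σ (σ w) ∈ V
        rw [hσσ]
        exact ⟨hwQ, hwF⟩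
      · intro z hz
        have h1 : σ z ∈ Q := (Set.mem_preimage.1 hz).1
        have h2 : σ (σ z) ∈ Q := hσQ _ h1
        rw [hσσ] at h2
        exact hQsubU h2
      · intro z hz
        have h1 : σ z ∈ V := hz
        have h2 : G (σ z) = 0 := hGQ h1.1
        have h3 : F (σ z) ≠ 0 := h1.2
        rw [hG] at h2
        simp only at h2
        rw [hσσ] at h2
        rcases mul_eq_zero.1 h2 with h | h
        · exact absurd h h3
        · exact (map_eq_zero (starRingEnd ℂ)).1 h
    · push_neg at hcase
      exact ⟨Q, hQopen, ⟨_, hz₀Q⟩, hQsubU, hcase⟩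
  -- identity theorem on the upper half disc
  have hana : AnalyticOnNhd ℂ F upperHalfDisc := hF_hol.analyticOnNhd hopen
  obtain ⟨w₀, hw₀⟩ := hWne
  have hfreq : ∃ᶠ z in nhdsWithin w₀ {w₀}ᶜ, F z = 0 := by
    have hev : ∀ᶠ z in nhds w₀, F z = 0 :=
      Filter.eventually_of_mem (hWopen.mem_nhds hw₀) fun z hz => hWzero z hz
    exact (hev.filter_mono nhdsWithin_le_nhds).frequently
  have hEq := hana.eqOn_zero_of_preconnected_of_frequently_eq_zero
    convex_upperHalfDisc.isPreconnected (hWsub hw₀) hfreq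
  exact fun z hz => hEq hz

/-- **Observation 2.5, second part.**  If `F` is holomorphic on `Δ⁺`, continuous on
`Δ⁺ ∪ γ`, maps `γ` into a cone `{|Im z| ≤ C|Re z|}`, and is not identically zero on `Δ⁺`,
then `{t ∈ (-1,1) : Re F(t) ≠ 0}` is a relatively open dense subset of the interval
`(-1,1)` (since `(-1,1)` is open in `ℝ`, relative openness amounts to openness in `ℝ`). -/
theorem re_nonzero_open_dense_in_segment
    (F : ℂ → ℂ)
    (hF_hol : DifferentiableOn ℂ F upperHalfDisc)
    (hF_cont : ContinuousOn F (upperHalfDisc ∪ realSegment))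
    (C : ℝ) (hC : 0 < C)
    (hcone : ∀ t ∈ realSegment, |(F t).im| ≤ C * |(F t).re|)
    (hF_ne : ¬ (∀ z ∈ upperHalfDisc, F z = 0)) :
    IsOpen {t ∈ Set.Ioo (-1 : ℝ) 1 | (F (t : ℂ)).re ≠ 0} ∧
    Set.Ioo (-1 : ℝ) 1 ⊆ closure {t ∈ Set.Ioo (-1 : ℝ) 1 | (F (t : ℂ)).re ≠ 0} := by
  have hmem : ∀ t : ℝ, t ∈ Set.Ioo (-1:ℝ) 1 → (t : ℂ) ∈ realSegment := by
    intro t ht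
    exact ⟨Complex.ofReal_im t, by simpa using ht.1, by simpa using ht.2⟩
  have hcont : ContinuousOn (fun t : ℝ => (F (t:ℂ)).re) (Set.Ioo (-1:ℝ) 1) := by
    apply Complex.continuous_re.comp_continuousOn
    exact hF_cont.comp Complex.continuous_ofReal.continuousOn
      (fun t ht => Or.inr (hmem t ht))
  have hSeq : {t ∈ Set.Ioo (-1:ℝ) 1 | (F (t:ℂ)).re ≠ 0}
      = Set.Ioo (-1:ℝ) 1 ∩ (fun t : ℝ => (F (t:ℂ)).re) ⁻¹' ({0}ᶜ) := rfl
  constructor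
  · rw [hSeq]
    exact hcont.isOpen_inter_preimage isOpen_Ioo isOpen_compl_singleton
  · intro a ha
    by_contra hcl
    have hopen2 : IsOpen ((closure {t ∈ Set.Ioo (-1:ℝ) 1 | (F (t:ℂ)).re ≠ 0})ᶜ
        ∩ Set.Ioo (-1:ℝ) 1) :=
      isClosed_closure.isOpen_compl.inter isOpen_Ioo
    obtain ⟨ε, hε, hball⟩ := Metric.isOpen_iff.1 hopen2 a ⟨hcl, ha⟩
    have hFzero : ∀ t : ℝ, |t - a| < ε → F (t : ℂ) = 0 := by
      intro t ht
      have htb : t ∈ Metric.ball a ε := by rwa [Metric.mem_ball, Real.dist_eq]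
      obtain ⟨hnc, hIoo⟩ := hball htb
      have hre : (F (t:ℂ)).re = 0 := by
        by_contra hre
        exact hnc (subset_closure ⟨hIoo, hre⟩)
      have him : (F (t:ℂ)).im = 0 := by
        have h := hcone (t:ℂ) (hmem t hIoo)
        rw [hre] at h
        simp only [abs_zero, mul_zero] at h
        exact abs_nonpos_iff.1 h
      exact Complex.ext (by simp [hre]) (by simp [him])
    have ha1 : |a| < 1 := abs_lt.2 ⟨ha.1, ha.2⟩
    set d : ℝ := min ε (1 - |a|) / 4 with hdd
    have hd : 0 < d := by
      apply div_pos _ (by norm_num)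
      exact lt_min hε (by linarith)
    have hdε : d < ε := by
      have := min_le_left ε (1 - |a|)
      rw [hdd]
      linarith
    have hband : |a| + 2 * d < 1 := by
      have := min_le_right ε (1 - |a|)
      rw [hdd]
      linarith
    exact hF_ne (vanish_on_upperHalfDisc hF_hol hF_cont hd hband
      (fun t ht => hFzero t (lt_of_le_of_lt ht hdε)))
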